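/- Let S be a nonempty semigroup such that S \ E(S) is finite, and let T be an S-valued sequence of length |S \ E(S)| with Π(T) ∩ E(S) = ∅. Then for every a ∈ supp(T), the cyclic subsemigroup ⟨a⟩ is finite, v_a(T) = I(a) + P(a) − 2, and I(a) ≡ 1 (mod P(a)), where I(a) and P(a) are the index and period of a. -/

import Mathlib

/-- Product, in order, of the nonempty list `a :: l` in a semigroup. -/
def sprod {S : Type*} [Mul S] (a : S) (l : List S) : S := l.foldl (· * ·) a

/-- `pow1 x n = x^(n+1)`: the `(n+1)`-st power of `x` in a semigroup. -/
def pow1 {S : Type*} [Mul S] (x : S) : ℕ → S := fun n => Nat.rec x (fun _ y => y * x) n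

/-- `Π(T)`: the set of products, in order, of nonempty lists which are
permutations of order-preserving sublists of `T`. -/
def PiSet {S : Type*} [Mul S] (T : List S) : Set S :=
  {s | ∃ u : List S, u.Sublist T ∧ ∃ a l, (a :: l).Perm u ∧ sprod a l = s}

/-- `A(L)`: the set of products, in order, of nonempty order-preserving sublists of `L`. -/
def ASet {S : Type*} [Mul S] (L : List S) : Set S :=
  {s | ∃ a l, (a :: l).Sublist L ∧ sprod a l = s}

/-- `HasIndexPeriod x r p` says that `r` is the index of `x` (the least `r > 0` such
that `x^r = x^t` for some positive `t ≠ r`) and `p` is the period of `x` (the least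
`p > 0` with `x^(r+p) = x^r`). Powers are expressed via `pow1 x (n-1) = x^n`. -/
def HasIndexPeriod {S : Type*} [Mul S] (x : S) (r p : ℕ) : Prop :=
  (0 < r ∧ (∃ t, 0 < t ∧ t ≠ r ∧ pow1 x (t - 1) = pow1 x (r - 1)) ∧
    ∀ r', 0 < r' → (∃ t, 0 < t ∧ t ≠ r' ∧ pow1 x (t - 1) = pow1 x (r' - 1)) → r ≤ r') ∧
  (0 < p ∧ pow1 x (r + p - 1) = pow1 x (r - 1) ∧
    ∀ p', 0 < p' → pow1 x (r + p' - 1) = pow1 x (r - 1) → p ≤ p')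

section Machinery
set_option linter.unusedSectionVars false

variable {S : Type*} [Semigroup S] [DecidableEq S]

@[simp] lemma sprod_nil (a : S) : sprod a [] = a := rfl

lemma sprod_cons (a b : S) (l : List S) : sprod a (b :: l) = sprod (a * b) l := rfl

lemma sprod_append (a : S) (l m : List S) :
    sprod a (l ++ m) = sprod (sprod a l) m := List.foldl_append ..

lemma mul_sprod (x a : S) (l : List S) : x * sprod a l = sprod (x * a) l := by
  induction l generalizing a with
  | nil => rfl
  | cons b t ih => rw [sprod_cons, sprod_cons, ih, mul_assoc]

@[simp] lemma pow1_zero (x : S) : pow1 x 0 = x := rfl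

lemma pow1_succ (x : S) (n : ℕ) : pow1 x (n + 1) = pow1 x n * x := rfl

lemma pow1_succ' (x : S) (n : ℕ) : pow1 x (n + 1) = x * pow1 x n := by
  induction n with
  | zero => rfl
  | succ n ih => rw [pow1_succ x (n+1), ih, mul_assoc, ← pow1_succ, ih]

lemma pow1_add (x : S) (i j : ℕ) : pow1 x (i + j + 1) = pow1 x i * pow1 x j := by
  induction j with
  | zero => rfl
  | succ j ih =>
      have : i + (j + 1) + 1 = (i + j + 1) + 1 := by omega
      rw [this, pow1_succ, ih, pow1_succ, mul_assoc]

lemma pow1_shift {x : S} {i d : ℕ} (h : pow1 x i = pow1 x (i + d)) :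
    ∀ n, i ≤ n → pow1 x n = pow1 x (n + d) := by
  intro n hn
  obtain ⟨k, rfl⟩ := Nat.exists_eq_add_of_le hn
  cases k with
  | zero => simpa using h
  | succ k =>
      have e1 : pow1 x (i + (k+1)) = pow1 x i * pow1 x k := by
        rw [show i + (k+1) = i + k + 1 by omega, pow1_add]
      have e2 : pow1 x (i + (k+1) + d) = pow1 x (i+d) * pow1 x k := by
        rw [show i + (k+1) + d = (i+d) + k + 1 by omega, pow1_add]
      rw [e1, e2, h]

lemma pow1_shift_mul {x : S} {i d : ℕ} (h : pow1 x i = pow1 x (i + d)) :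
    ∀ t n, i ≤ n → pow1 x n = pow1 x (n + t * d) := by
  intro t
  induction t with
  | zero => simp
  | succ t ih =>
      intro n hn
      have h1 := ih n hn
      have h2 := pow1_shift h (n + t * d) (by omega)
      rw [h1, h2]
      congr 1
      ring

lemma sprod_replicate (a : S) (n : ℕ) : sprod a (List.replicate n a) = pow1 a n := by
  induction n with
  | zero => rfl
  | succ n ih => rw [List.replicate_succ', sprod_append, ih]; rfl

/-- Finset of products of nonempty sublists. -/
def aset : List S → Finset S
  | [] => ∅
  | x :: l => insert x (aset l ∪ (aset l).image (x * ·))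

@[simp] lemma aset_nil : (aset ([] : List S)) = ∅ := rfl

lemma aset_cons (x : S) (l : List S) :
    aset (x :: l) = insert x (aset l ∪ (aset l).image (x * ·)) := rfl

lemma mem_aset {s : S} {l : List S} :
    s ∈ aset l ↔ ∃ a m, (a :: m).Sublist l ∧ sprod a m = s := by
  induction l generalizing s with
  | nil =>
      simp only [aset_nil, Finset.notMem_empty, false_iff]
      rintro ⟨a, m, hsub, -⟩
      exact absurd (hsub.length_le) (by simp)
  | cons x t ih =>
      rw [aset_cons]
      simp only [Finset.mem_insert, Finset.mem_union, Finset.mem_image]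
      constructor
      · rintro (rfl | h | ⟨y, hy, rfl⟩)
        · exact ⟨s, [], by simp, rfl⟩
        · obtain ⟨a, m, hsub, hp⟩ := ih.1 h
          exact ⟨a, m, hsub.trans (List.sublist_cons_self x t), hp⟩
        · obtain ⟨a, m, hsub, hp⟩ := ih.1 hy
          refine ⟨x, a :: m, List.cons_sublist_cons.2 hsub, ?_⟩
          rw [sprod_cons, ← mul_sprod, hp]
      · rintro ⟨a, m, hsub, hp⟩
        cases hsub with
        | cons _ h' => exact Or.inr (Or.inl (ih.2 ⟨a, m, h', hp⟩))
        | cons_cons _ h' =>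
            cases m with
            | nil => exact Or.inl hp.symm
            | cons b m' =>
                refine Or.inr (Or.inr ⟨sprod b m', ih.2 ⟨b, m', h', rfl⟩, ?_⟩)
                rw [mul_sprod]; exact hp


lemma aset_subset_cons (x : S) (l : List S) : aset l ⊆ aset (x :: l) := by
  rw [aset_cons]
  intro s hs
  exact Finset.mem_insert_of_mem (Finset.mem_union_left _ hs)

lemma aset_prefix_subset (t l : List S) : aset l ⊆ aset (t ++ l) := by
  induction t with
  | nil => exact Finset.Subset.refl _
  | cons x t ih => exact ih.trans (aset_subset_cons x (t ++ l))

lemma mem_aset_self (b : S) {l : List S} (hb : b ∈ l) : b ∈ aset l :=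
  mem_aset.2 ⟨b, [], List.singleton_sublist.2 hb, rfl⟩

lemma exists_collision (hfin : {x : S | x * x ≠ x}.Finite) (x : S) :
    ∃ i d, 0 < d ∧ pow1 x i = pow1 x (i + d) := by
  by_cases hid : ∃ n, pow1 x n * pow1 x n = pow1 x n
  · obtain ⟨n, hn⟩ := hid
    exact ⟨n, n + 1, by omega, by rw [show n + (n+1) = n + n + 1 by omega, pow1_add, hn]⟩
  · push_neg at hid
    have hmem : ∀ n, pow1 x n ∈ hfin.toFinset := by
      intro n; rw [Set.Finite.mem_toFinset]; exact hid n
    obtain ⟨i, j, hne, heq⟩ :=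
      Finite.exists_ne_map_eq_of_infinite (fun n : ℕ => (⟨pow1 x n, hmem n⟩ : hfin.toFinset))
    have heq' : pow1 x i = pow1 x j := congrArg Subtype.val heq
    rcases Nat.lt_or_ge i j with h | h
    · exact ⟨i, j - i, by omega, by rw [heq']; congr 1; omega⟩
    · have hj : j < i := by omega
      exact ⟨j, i - j, by omega, by rw [← heq']; congr 1; omega⟩

lemma exists_idem_pow (hfin : {x : S | x * x ≠ x}.Finite) (x : S) :
    ∃ n, pow1 x n * pow1 x n = pow1 x n := by
  obtain ⟨i, d, hd, h⟩ := exists_collision hfin x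
  set k := d * (i + 1) with hk
  have hk1 : i + 1 ≤ k := Nat.le_mul_of_pos_left _ hd
  refine ⟨k - 1, ?_⟩
  set n := k - 1 with hn
  have hni : i ≤ n := by omega
  have hd' : n + (n + 1) = n + (i + 1) * d := by
    have h2 : n + 1 = k := by omega
    rw [h2, hk]; ring
  rw [← pow1_add, show n + n + 1 = n + (n+1) by omega, hd',
    ← pow1_shift_mul h (i + 1) n hni]

lemma pow1_range_finite (hfin : {x : S | x * x ≠ x}.Finite) (x : S) :
    (Set.range (pow1 x)).Finite := by
  obtain ⟨i, d, hd, h⟩ := exists_collision hfin x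
  apply Set.Finite.subset ((Finset.range (i + d)).image (pow1 x)).finite_toSet
  rintro s ⟨n, rfl⟩
  simp only [Finset.coe_image, Set.mem_image, Finset.mem_coe, Finset.mem_range]
  induction n using Nat.strong_induction_on with
  | _ n ih =>
    rcases Nat.lt_or_ge n (i + d) with hlt | hge
    · exact ⟨n, hlt, rfl⟩
    · have he : pow1 x (n - d) = pow1 x n := by
        have h2 := pow1_shift h (n - d) (by omega)
        rw [h2]; congr 1; omega
      obtain ⟨m, hm, hme⟩ := ih (n - d) (by omega)
      exact ⟨m, hm, by rw [hme, he]⟩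

lemma mem_PiSet_of_aset {T l : List S} {s : S} (hl : l.Subperm T) (hs : s ∈ aset l) :
    s ∈ PiSet T := by
  obtain ⟨a, m, hsub, hp⟩ := mem_aset.1 hs
  obtain ⟨u, hu1, hu2⟩ := (hsub.subperm.trans hl)
  exact ⟨u, hu2, a, m, hu1.symm, hp⟩

lemma nonidem {T : List S} (hfree : PiSet T ∩ {e : S | e * e = e} = ∅)
    {s : S} (hs : s ∈ PiSet T) : s * s ≠ s := by
  intro h
  have hmem : s ∈ PiSet T ∩ {e : S | e * e = e} := ⟨hs, h⟩
  rw [hfree] at hmem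
  exact hmem

lemma aset_nonidem {T : List S} (hfree : PiSet T ∩ {e : S | e * e = e} = ∅)
    {l : List S} {s : S} (hl : l.Subperm T) (hs : s ∈ aset l) :
    s * s ≠ s := nonidem hfree (mem_PiSet_of_aset hl hs)

lemma aset_subset_F (hfin : {x : S | x * x ≠ x}.Finite) {T : List S}
    (hfree : PiSet T ∩ {e : S | e * e = e} = ∅)
    {l : List S} (hl : l.Subperm T) : aset l ⊆ hfin.toFinset := by
  intro s hs
  rw [Set.Finite.mem_toFinset]
  exact aset_nonidem hfree hl hs

lemma growth (hfin : {x : S | x * x ≠ x}.Finite) {T : List S}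
    (hfree : PiSet T ∩ {e : S | e * e = e} = ∅)
    {b : S} {l : List S} (hl : (b :: l).Subperm T) :
    ∃ s ∈ aset (b :: l), s ∉ aset l := by
  by_contra hcon
  push_neg at hcon
  have hsub : aset (b :: l) ⊆ aset l := hcon
  have hb : b ∈ aset l := hsub (by rw [aset_cons]; exact Finset.mem_insert_self _ _)
  have hclose : ∀ y ∈ aset l, b * y ∈ aset l := by
    intro y hy
    apply hsub
    rw [aset_cons]
    exact Finset.mem_insert_of_mem (Finset.mem_union_right _ (Finset.mem_image_of_mem _ hy))
  have hpow : ∀ n, pow1 b n ∈ aset l := by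
    intro n
    induction n with
    | zero => exact hb
    | succ n ih => rw [pow1_succ']; exact hclose _ ih
  obtain ⟨n, hn⟩ := exists_idem_pow hfin b
  have hlT : l.Subperm T := ((List.sublist_cons_self b l).subperm).trans hl
  exact aset_nonidem hfree hlT (hpow n) hn

lemma card_lt (hfin : {x : S | x * x ≠ x}.Finite) {T : List S}
    (hfree : PiSet T ∩ {e : S | e * e = e} = ∅)
    {b : S} {l : List S} (hl : (b :: l).Subperm T) :
    (aset l).card < (aset (b :: l)).card := by
  obtain ⟨s, hs1, hs2⟩ := growth hfin hfree hl
  exact Finset.card_lt_card ⟨aset_subset_cons b l, fun hsub => hs2 (hsub hs1)⟩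

lemma card_chain (hfin : {x : S | x * x ≠ x}.Finite) {T : List S}
    (hfree : PiSet T ∩ {e : S | e * e = e} = ∅) :
    ∀ (t l : List S), (t ++ l).Subperm T →
    (aset l).card + t.length ≤ (aset (t ++ l)).card := by
  intro t
  induction t with
  | nil => intro l _; simp
  | cons x t ih =>
      intro l hl
      rw [List.cons_append] at hl ⊢
      have h1 : (t ++ l).Subperm T :=
        ((List.sublist_cons_self x (t ++ l)).subperm).trans hl
      have h2 := card_lt hfin hfree (l := t ++ l) hl
      have h3 := ih l h1
      simp only [List.length_cons]
      omega

lemma FfinCard (hfin : {x : S | x * x ≠ x}.Finite) {T : List S}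
    (hlen : T.length = {x : S | x * x ≠ x}.ncard) :
    (hfin.toFinset).card = T.length := by
  rw [hlen, Set.ncard_eq_toFinset_card _ hfin]

lemma aset_lower (hfin : {x : S | x * x ≠ x}.Finite) {T : List S}
    (hfree : PiSet T ∩ {e : S | e * e = e} = ∅) :
    ∀ (l : List S), l.Subperm T → l.length ≤ (aset l).card := by
  intro l
  induction l with
  | nil => simp
  | cons x t ih =>
      intro hl
      have h1 := ih (((List.sublist_cons_self x t).subperm).trans hl)
      have h2 := card_lt hfin hfree hl
      simp only [List.length_cons]
      omega

lemma aset_tight (hfin : {x : S | x * x ≠ x}.Finite) {T : List S}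
    (hlen : T.length = {x : S | x * x ≠ x}.ncard)
    (hfree : PiSet T ∩ {e : S | e * e = e} = ∅)
    {l : List S} (hl : l.Subperm T) : (aset l).card = l.length := by
  refine le_antisymm ?_ (aset_lower hfin hfree l hl)
  set t := ((T : Multiset S) - (l : Multiset S)).toList with ht
  have hcoe : ((t ++ l : List S) : Multiset S) = (T : Multiset S) := by
    rw [← Multiset.coe_add, ht, Multiset.coe_toList]
    exact tsub_add_cancel_of_le (Multiset.coe_le.2 hl)
  have hperm : (t ++ l).Perm T := Multiset.coe_eq_coe.1 hcoe
  have hchain := card_chain hfin hfree t l hperm.subperm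
  have hF := Finset.card_le_card (aset_subset_F hfin hfree hperm.subperm)
  rw [FfinCard hfin hlen] at hF
  have hlen2 : t.length + l.length = T.length := by
    have hc := congrArg Multiset.card hcoe
    simpa using hc
  omega

lemma aset_full (hfin : {x : S | x * x ≠ x}.Finite) {T : List S}
    (hlen : T.length = {x : S | x * x ≠ x}.ncard)
    (hfree : PiSet T ∩ {e : S | e * e = e} = ∅)
    {l : List S} (hl : l.Perm T) : aset l = hfin.toFinset := by
  apply Finset.eq_of_subset_of_card_le (aset_subset_F hfin hfree hl.subperm)
  rw [FfinCard hfin hlen, aset_tight hfin hlen hfree hl.subperm]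
  exact hl.length_eq.ge

lemma constance (hfin : {x : S | x * x ≠ x}.Finite) {T : List S}
    (hlen : T.length = {x : S | x * x ≠ x}.ncard)
    (hfree : PiSet T ∩ {e : S | e * e = e} = ∅) :
    ∀ (k : ℕ) (l l' : List S), l.Subperm T → l'.Subperm T → l.Perm l' →
    T.length - l.length = k → aset l = aset l' := by
  intro k
  induction k with
  | zero =>
      intro l l' hl hl' hp hk
      have h0 : l.length ≤ T.length := hl.length_le
      have h1 : T.length ≤ l.length := by omega
      have h2 : ((l : Multiset S)) = (T : Multiset S) :=
        Multiset.eq_of_le_of_card_le (Multiset.coe_le.2 hl) (by simpa using h1)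
      have h3 : l.Perm T := Multiset.coe_eq_coe.1 h2
      rw [aset_full hfin hlen hfree h3, aset_full hfin hlen hfree (hp.symm.trans h3)]
  | succ k ih =>
      intro l l' hl hl' hp hk
      have h0 : l.length ≤ T.length := hl.length_le
      have hllen : l.length < T.length := by omega
      have hlt : (l : Multiset S) < (T : Multiset S) := by
        apply lt_of_le_of_ne (Multiset.coe_le.2 hl)
        intro hcon
        have hcc := congrArg Multiset.card hcon
        simp only [Multiset.coe_card] at hcc
        omega
      obtain ⟨b, hb⟩ := Multiset.lt_iff_cons_le.1 hlt
      have hbl : (b :: l).Subperm T := Multiset.coe_le.1 (by rwa [Multiset.cons_coe] at hb)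
      have hbl' : (b :: l').Subperm T := by
        have hcc : (b ::ₘ (l' : Multiset S)) ≤ (T : Multiset S) := by
          rw [← Multiset.coe_eq_coe.2 hp]; exact hb
        exact Multiset.coe_le.1 (by rwa [Multiset.cons_coe] at hcc)
      have hG : aset (b :: l) = aset (b :: l') :=
        ih (b :: l) (b :: l') hbl hbl' (hp.cons b) (by simp only [List.length_cons]; omega)
      -- escape element
      have hesc : ∃ z ∈ aset (b :: l), b * z ∉ aset (b :: l) := by
        by_contra hcon
        push_neg at hcon
        have hbmem : b ∈ aset (b :: l) := by
          rw [aset_cons]; exact Finset.mem_insert_self _ _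
        have hpow : ∀ n, pow1 b n ∈ aset (b :: l) := by
          intro n
          induction n with
          | zero => exact hbmem
          | succ n ihn => rw [pow1_succ']; exact hcon _ ihn
        obtain ⟨n, hn⟩ := exists_idem_pow hfin b
        exact aset_nonidem hfree hbl (hpow n) hn
      obtain ⟨z, hzG, hzO⟩ := hesc
      have hnotl : z ∉ aset l := by
        intro hz
        apply hzO
        rw [aset_cons]
        exact Finset.mem_insert_of_mem
          (Finset.mem_union_right _ (Finset.mem_image_of_mem _ hz))
      have hnotl' : z ∉ aset l' := by
        intro hz
        apply hzO
        rw [hG, aset_cons]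
        exact Finset.mem_insert_of_mem
          (Finset.mem_union_right _ (Finset.mem_image_of_mem _ hz))
      have hzG' : z ∈ aset (b :: l') := hG ▸ hzG
      have key : ∀ (m : List S), m.Subperm T → (aset m).card = m.length →
          m.length = l.length → aset m ⊆ aset (b :: l) → z ∉ aset m →
          aset m = (aset (b :: l)).erase z := by
        intro m hm htm hml hsub hzm
        apply Finset.eq_of_subset_of_card_le
        · intro w hw
          rw [Finset.mem_erase]
          exact ⟨fun h => hzm (h ▸ hw), hsub hw⟩
        · rw [Finset.card_erase_of_mem hzG, htm,
            aset_tight hfin hlen hfree hbl]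
          simp only [List.length_cons]
          omega
      have e1 : aset l = (aset (b :: l)).erase z :=
        key l hl (aset_tight hfin hlen hfree hl) rfl (aset_subset_cons b l) hnotl
      have e2 : aset l' = (aset (b :: l)).erase z :=
        key l' hl' (aset_tight hfin hlen hfree hl') hp.length_eq.symm
          (hG ▸ aset_subset_cons b l') hnotl'
      rw [e1, e2]

lemma aset_congr (hfin : {x : S | x * x ≠ x}.Finite) {T : List S}
    (hlen : T.length = {x : S | x * x ≠ x}.ncard)
    (hfree : PiSet T ∩ {e : S | e * e = e} = ∅)
    {l l' : List S} (hl : l.Subperm T) (hl' : l'.Subperm T) (hp : l.Perm l') :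
    aset l = aset l' :=
  constance hfin hlen hfree (T.length - l.length) l l' hl hl' hp rfl

lemma aset_mono (hfin : {x : S | x * x ≠ x}.Finite) {T : List S}
    (hlen : T.length = {x : S | x * x ≠ x}.ncard)
    (hfree : PiSet T ∩ {e : S | e * e = e} = ∅)
    {l l' : List S} (hl : l.Subperm l') (hl' : l'.Subperm T) :
    aset l ⊆ aset l' := by
  set t := ((l' : Multiset S) - (l : Multiset S)).toList with ht
  have hcoe : ((t ++ l : List S) : Multiset S) = (l' : Multiset S) := by
    rw [← Multiset.coe_add, ht, Multiset.coe_toList]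
    exact tsub_add_cancel_of_le (Multiset.coe_le.2 hl)
  have hperm : (t ++ l).Perm l' := Multiset.coe_eq_coe.1 hcoe
  have heq : aset (t ++ l) = aset l' :=
    aset_congr hfin hlen hfree (hperm.subperm.trans hl') hl' hperm
  exact heq ▸ aset_prefix_subset t l


lemma filter_erase_of_pos {p : S → Bool} {b : S} (hb : p b = true) :
    ∀ (l : List S), (l.erase b).filter p = (l.filter p).erase b := by
  intro l
  induction l with
  | nil => rfl
  | cons x t ih =>
      by_cases hxb : x = b
      · subst hxb
        rw [List.erase_cons_head, List.filter_cons_of_pos hb, List.erase_cons_head]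
      · have hbeq : ¬(x == b) = true := by simpa using hxb
        rw [List.erase_cons_tail hbeq]
        by_cases hpx : p x = true
        · rw [List.filter_cons_of_pos hpx, List.filter_cons_of_pos hpx,
            List.erase_cons_tail hbeq, ih]
        · rw [List.filter_cons_of_neg hpx, List.filter_cons_of_neg hpx, ih]

lemma filter_erase_self {c : S} :
    ∀ (l : List S), (l.erase c).filter (fun x => !decide (x = c)) =
      l.filter (fun x => !decide (x = c)) := by
  intro l
  induction l with
  | nil => rfl
  | cons x t ih =>
      by_cases hxc : x = c
      · subst hxc
        rw [List.erase_cons_head, List.filter_cons_of_neg (by simp)]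
      · have hbeq : ¬(x == c) = true := by simpa using hxc
        rw [List.erase_cons_tail hbeq, List.filter_cons_of_pos (by simpa using hxc),
          List.filter_cons_of_pos (by simpa using hxc), ih]

lemma idem_of_pow_succ_eq {c : S} {k : ℕ} (h : pow1 c (k + 1) = pow1 c k) :
    pow1 c k * pow1 c k = pow1 c k := by
  have hstab : ∀ j, pow1 c (k + j) = pow1 c k := by
    intro j
    induction j with
    | zero => rfl
    | succ j ihj =>
        rw [show k + (j+1) = (k + j) + 1 by omega, pow1_succ, ihj, ← pow1_succ, h]
  rw [← pow1_add, show k + k + 1 = k + (k+1) by omega, hstab]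

lemma lemx (hfin : {x : S | x * x ≠ x}.Finite) {T : List S}
    (hlen : T.length = {x : S | x * x ≠ x}.ncard)
    (hfree : PiSet T ∩ {e : S | e * e = e} = ∅) :
    ∀ (n : ℕ) (l : List S), l.Subperm T → l.length ≤ n → ∀ c ∈ l, ∀ k,
      pow1 c k ∉ aset (l.filter (fun x => !decide (x = c))) := by
  intro n
  induction n with
  | zero =>
      intro l _ hlen0 c hc k
      rw [List.length_eq_zero_iff.1 (Nat.le_zero.1 hlen0)] at hc
      simp at hc
  | succ n ih =>
      intro l hlT hlen1 c hc k hk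
      by_cases h2 : 2 ≤ l.count c
      · -- at least two copies of c : strip one and use induction
        have hcl' : c ∈ l.erase c := by
          rw [← List.count_pos_iff, List.count_erase_self]; omega
        have htr : (l.erase c).filter (fun x => !decide (x = c)) =
            l.filter (fun x => !decide (x = c)) := filter_erase_self l
        exact ih (l.erase c) ((List.erase_sublist (a := c) (l := l)).subperm.trans hlT)
          (by have := List.length_erase_of_mem hc; omega) c hcl' k (htr ▸ hk)
      · -- exactly one copy of c
        have h1 : l.count c = 1 := by
          have := List.count_pos_iff.2 hc
          omega
        set Rl := l.filter (fun x => !decide (x = c)) with hRl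
        have hmemRl : ∀ b ∈ Rl, b ≠ c := by
          intro b hb
          have := (List.mem_filter.1 hb).2
          simpa using this
        have hpermT : (c :: Rl).Perm l := by
          have hfp := List.filter_append_perm (fun x => decide (x = c)) l
          rw [List.filter_eq (l := l) c, h1] at hfp
          simpa using hfp
        have hcRlT : (c :: Rl).Subperm T := hpermT.subperm.trans hlT
        have hRlT : Rl.Subperm T := (List.filter_sublist (l := l)).subperm.trans hlT
        have hAG : aset Rl ⊆ aset (c :: Rl) := aset_subset_cons c Rl
        have cardA : (aset Rl).card = Rl.length := aset_tight hfin hlen hfree hRlT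
        have cardG : (aset (c :: Rl)).card = Rl.length + 1 := by
          rw [aset_tight hfin hlen hfree hcRlT]; rfl
        obtain ⟨xh, hxh⟩ : ∃ xh, aset (c :: Rl) \ aset Rl = {xh} := by
          apply Finset.card_eq_one.1
          rw [Finset.card_sdiff_of_subset hAG, cardA, cardG]
          omega
        have hGsplit : ∀ w, w ∈ aset (c :: Rl) → w ∉ aset Rl → w = xh := by
          intro w hw hw2
          have hmem : w ∈ aset (c :: Rl) \ aset Rl := Finset.mem_sdiff.2 ⟨hw, hw2⟩
          rw [hxh] at hmem
          simpa using hmem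
        have hxhA : xh ∉ aset Rl := by
          have hmem : xh ∈ aset (c :: Rl) \ aset Rl := by
            rw [hxh]; exact Finset.mem_singleton_self xh
          exact (Finset.mem_sdiff.1 hmem).2
        -- induction hypothesis: no power of c among products of Rl minus one element
        have hIH : ∀ b ∈ Rl, ∀ k', pow1 c k' ∉ aset (Rl.erase b) := by
          intro b hb k'
          have hbl : b ∈ l := (List.mem_filter.1 hb).1
          have hbc : b ≠ c := hmemRl b hb
          have hcel : c ∈ l.erase b := (List.mem_erase_of_ne (Ne.symm hbc)).2 hc
          have heq : (l.erase b).filter (fun x => !decide (x = c)) = Rl.erase b := by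
            rw [hRl]
            exact filter_erase_of_pos (by simpa using hbc) l
          have hres := ih (l.erase b) ((List.erase_sublist (a := b) (l := l)).subperm.trans hlT)
            (by have := List.length_erase_of_mem hbl; omega) c hcel k'
          rwa [heq] at hres
        have hbset : ∀ b ∈ Rl, aset (b :: Rl.erase b) = aset Rl := by
          intro b hb
          exact aset_congr hfin hlen hfree
            ((List.perm_cons_erase hb).symm.subperm.trans hRlT) hRlT
            (List.perm_cons_erase hb).symm
        have sdiff1 : ∀ b ∈ Rl, ∃ w, aset Rl \ aset (Rl.erase b) = {w} := by
          intro b hb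
          apply Finset.card_eq_one.1
          have hsubb : aset (Rl.erase b) ⊆ aset Rl := by
            rw [← hbset b hb]; exact aset_subset_cons _ _
          have htb : (aset (Rl.erase b)).card = Rl.length - 1 := by
            rw [aset_tight hfin hlen hfree ((List.erase_sublist (a := b) (l := Rl)).subperm.trans hRlT),
              List.length_erase_of_mem hb]
          have hlpos : 0 < Rl.length := List.length_pos_iff.2 (List.ne_nil_of_mem hb)
          rw [Finset.card_sdiff_of_subset hsubb, cardA, htb]
          omega
        have uniq : ∀ k₁ k₂, pow1 c k₁ ∈ aset Rl → pow1 c k₂ ∈ aset Rl →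
            pow1 c k₁ = pow1 c k₂ := by
          intro k₁ k₂ hk₁ hk₂
          obtain ⟨b₀, hb₀⟩ : ∃ b, b ∈ Rl := by
            cases hRlc : Rl with
            | nil => rw [hRlc] at hk₁; simp at hk₁
            | cons b t => exact ⟨b, hRlc ▸ List.mem_cons_self (a := b) (l := t)⟩
          obtain ⟨w, hw⟩ := sdiff1 b₀ hb₀
          have e₁ : pow1 c k₁ = w := by
            have hmem : pow1 c k₁ ∈ aset Rl \ aset (Rl.erase b₀) :=
              Finset.mem_sdiff.2 ⟨hk₁, hIH b₀ hb₀ k₁⟩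
            rw [hw] at hmem; simpa using hmem
          have e₂ : pow1 c k₂ = w := by
            have hmem : pow1 c k₂ ∈ aset Rl \ aset (Rl.erase b₀) :=
              Finset.mem_sdiff.2 ⟨hk₂, hIH b₀ hb₀ k₂⟩
            rw [hw] at hmem; simpa using hmem
          rw [e₁, e₂]
        have escape : ∀ b ∈ Rl, b * pow1 c k ∉ aset Rl := by
          intro b hb
          have hex : ∃ z ∈ aset Rl, b * z ∉ aset Rl := by
            by_contra hcon
            push_neg at hcon
            have hbA : b ∈ aset Rl := mem_aset_self b hb
            have hpow : ∀ m, pow1 b m ∈ aset Rl := by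
              intro m
              induction m with
              | zero => exact hbA
              | succ m ihm => rw [pow1_succ']; exact hcon _ ihm
            obtain ⟨m, hm⟩ := exists_idem_pow hfin b
            exact aset_nonidem hfree hRlT (hpow m) hm
          obtain ⟨z, hz1, hz2⟩ := hex
          have hzw : z ∉ aset (Rl.erase b) := by
            intro hzz
            apply hz2
            have hmem : b * z ∈ aset (b :: Rl.erase b) := by
              rw [aset_cons]
              exact Finset.mem_insert_of_mem
                (Finset.mem_union_right _ (Finset.mem_image_of_mem _ hzz))
            rwa [hbset b hb] at hmem
          obtain ⟨w, hw⟩ := sdiff1 b hb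
          have e₁ : z = w := by
            have hmem : z ∈ aset Rl \ aset (Rl.erase b) := Finset.mem_sdiff.2 ⟨hz1, hzw⟩
            rw [hw] at hmem; simpa using hmem
          have e₂ : pow1 c k = w := by
            have hmem : pow1 c k ∈ aset Rl \ aset (Rl.erase b) :=
              Finset.mem_sdiff.2 ⟨hk, hIH b hb k⟩
            rw [hw] at hmem; simpa using hmem
          rw [← e₂] at e₁
          rw [← e₁]
          exact hz2
        -- x * c ∈ G
        have happend : ∀ y, y ∈ aset Rl → y * c ∈ aset (c :: Rl) := by
          intro y hy
          obtain ⟨a₀, m₀, hsub₀, hp₀⟩ := mem_aset.1 hy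
          have hsub1 : (a₀ :: (m₀ ++ [c])).Sublist (Rl ++ [c]) := by
            have := List.Sublist.append hsub₀ (List.Sublist.refl [c])
            simpa using this
          have hmem1 : y * c ∈ aset (Rl ++ [c]) := by
            apply mem_aset.2 ⟨a₀, m₀ ++ [c], hsub1, ?_⟩
            rw [sprod_append, hp₀]
            rfl
          have hRlc : (Rl ++ [c]).Subperm T :=
            (List.perm_append_singleton c Rl).subperm.trans hcRlT
          have heqa : aset (Rl ++ [c]) = aset (c :: Rl) :=
            aset_congr hfin hlen hfree hRlc hcRlT (List.perm_append_singleton c Rl)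
          rwa [heqa] at hmem1
        have hxc : pow1 c (k + 1) ∈ aset (c :: Rl) := by
          rw [pow1_succ]
          exact happend _ hk
        by_cases hca : pow1 c (k+1) ∈ aset Rl
        · exact aset_nonidem hfree hRlT hk (idem_of_pow_succ_eq (uniq (k+1) k hca hk)) 
        have hxh1 : xh = pow1 c (k+1) := (hGsplit _ hxc hca).symm
        have hcG : c ∈ aset (c :: Rl) := by
          rw [aset_cons]; exact Finset.mem_insert_self _ _
        by_cases hcc : c ∈ aset Rl
        · -- main case : c itself is a product of Rl
          have hxceq : pow1 c k = c := uniq k 0 hk hcc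
          have hc2G : c * c ∈ aset (c :: Rl) := happend c hcc
          by_cases hccA : c * c ∈ aset Rl
          · have hceq : pow1 c 1 = pow1 c 0 := uniq 1 0 hccA hcc
            exact aset_nonidem hfree hRlT hcc (idem_of_pow_succ_eq hceq)
          have hxh2 : xh = c * c := (hGsplit _ hc2G hccA).symm
          have hbc : ∀ b ∈ Rl, b * c = c * c := by
            intro b hb
            have hsp : [b, c].Subperm (c :: Rl) := by
              refine (List.Perm.swap b c []).symm.subperm.trans ?_
              exact (List.subperm_cons c).2 (List.singleton_sublist.2 hb).subperm
            have hmem2 : b * c ∈ aset [b, c] :=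
              mem_aset.2 ⟨b, [c], List.Sublist.refl _, rfl⟩
            have h1' : b * c ∈ aset (c :: Rl) :=
              aset_mono hfin hlen hfree hsp hcRlT hmem2
            have h2' : b * c ∉ aset Rl := by
              rw [← hxceq]; exact escape b hb
            rw [hGsplit _ h1' h2', hxh2]
          obtain ⟨b₁, b₂, rest, hRlshape⟩ : ∃ b₁ b₂ rest, Rl = b₁ :: b₂ :: rest := by
            have hne : Rl ≠ [] := by
              intro h0
              rw [h0] at hcc
              simp at hcc
            obtain ⟨b₁', t₁, he₁⟩ := List.exists_cons_of_ne_nil hne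
            have hne₂ : t₁ ≠ [] := by
              intro h0
              rw [he₁, h0] at hcc
              have hcb : c = b₁' := by
                rw [aset_cons] at hcc
                simpa using hcc
              exact (hmemRl b₁' (by rw [he₁, h0]; simp)) hcb.symm
            obtain ⟨b₂', t₂, he₂⟩ := List.exists_cons_of_ne_nil hne₂
            exact ⟨b₁', b₂', t₂, by rw [he₁, he₂]⟩
          have hb₁ : b₁ ∈ Rl := by rw [hRlshape]; simp
          have hb₂ : b₂ ∈ Rl := by rw [hRlshape]; simp
          have hz1 : (b₁ * b₂) * c ∈ aset [b₁, b₂, c] :=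
            mem_aset.2 ⟨b₁, [b₂, c], List.Sublist.refl _, rfl⟩
          have hsp3 : [b₁, b₂, c].Subperm (c :: Rl) := by
            have hperm3 : ([b₁, b₂] ++ [c]).Perm (c :: [b₁, b₂]) :=
              List.perm_append_singleton c [b₁, b₂]
            have hsub2 : [b₁, b₂].Subperm Rl := by
              rw [hRlshape]
              exact (((List.nil_sublist rest).cons₂ b₂).cons₂ b₁).subperm
            exact hperm3.subperm.trans ((List.subperm_cons c).2 hsub2)
          have hzG : (b₁ * b₂) * c ∈ aset (c :: Rl) :=
            aset_mono hfin hlen hfree hsp3 hcRlT hz1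
          have hval : (b₁ * b₂) * c = (c * c) * c := by
            rw [mul_assoc, hbc b₂ hb₂, ← mul_assoc, hbc b₁ hb₁, mul_assoc]
          rw [hval] at hzG
          have hidemcc : (c * c) * (c * c) = c * c := by
            by_cases hfinal : (c * c) * c ∈ aset Rl
            · have hp2 : pow1 c 2 = pow1 c 0 := by
                have hmm : (c*c)*c = pow1 c 2 := rfl
                exact hmm ▸ uniq 2 0 (hmm ▸ hfinal) hcc
              have hccc : (c * c) * c = c := hp2
              rw [← mul_assoc, hccc]
            · have hccc : (c * c) * c = c * c := by
                rw [hGsplit _ hzG hfinal, hxh2]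
              rw [← mul_assoc, hccc]
              exact hccc
          exact aset_nonidem hfree hcRlT hc2G hidemcc
        · -- c ∉ aset Rl : c = xh = pow1 c (k+1)
          have hcxh : c = xh := hGsplit _ hcG hcc
          rw [hxh1] at hcxh
          rcases Nat.eq_zero_or_pos k with hk0 | hkpos
          · rw [hk0] at hk
            exact hcc hk
          · have hidem : pow1 c k * pow1 c k = pow1 c k := by
              rw [← pow1_add, show k + k + 1 = (k+1) + (k-1) + 1 by omega, pow1_add,
                ← hcxh, ← pow1_succ', show k - 1 + 1 = k by omega]
            exact aset_nonidem hfree hRlT hk hidem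

end Machinery

/-- For an idempotent-product free sequence `T` of maximal length `|S \ E(S)|`
and each `a ∈ supp(T)`: `⟨a⟩` is finite, `v_a(T) = I(a) + P(a) - 2`, and
`I(a) ≡ 1 (mod P(a))`. -/
theorem stmt_10 {S : Type*} [Semigroup S] [Nonempty S] [DecidableEq S]
    (hfin : {x : S | x * x ≠ x}.Finite)
    (T : List S) (hlen : T.length = {x : S | x * x ≠ x}.ncard)
    (hfree : PiSet T ∩ {e : S | e * e = e} = ∅) :
    ∀ a ∈ T, (Set.range (pow1 a)).Finite ∧
      ∃ r p : ℕ, HasIndexPeriod a r p ∧ T.count a = r + p - 2 ∧ r ≡ 1 [MOD p] := by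
  intro a ha
  refine ⟨pow1_range_finite hfin a, ?_⟩
  classical
  obtain ⟨i₀, d₀, hd₀, hcol⟩ := exists_collision hfin a
  have hQ : ∃ m, ∃ t, t ≠ m ∧ pow1 a t = pow1 a m :=
    ⟨i₀, i₀ + d₀, by omega, hcol.symm⟩
  set r0 := Nat.find hQ with hr0
  obtain ⟨t₀, ht₀ne, ht₀eq⟩ := Nat.find_spec hQ
  have hr0min : ∀ m, (∃ t, t ≠ m ∧ pow1 a t = pow1 a m) → r0 ≤ m :=
    fun m hm => Nat.find_min' hQ hm
  have ht₀gt : r0 < t₀ := by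
    rcases lt_trichotomy t₀ r0 with h | h | h
    · exact absurd (hr0min t₀ ⟨r0, by omega, ht₀eq.symm⟩) (by omega)
    · exact absurd h ht₀ne
    · exact h
  have hP : ∃ q, 0 < q ∧ pow1 a (r0 + q) = pow1 a r0 :=
    ⟨t₀ - r0, by omega, by rw [show r0 + (t₀ - r0) = t₀ by omega]; exact ht₀eq⟩
  set p := Nat.find hP with hpdef
  obtain ⟨hppos, hpeq⟩ := Nat.find_spec hP
  have hpmin : ∀ q, 0 < q → pow1 a (r0 + q) = pow1 a r0 → p ≤ q :=
    fun q h1 h2 => Nat.find_min' hP ⟨h1, h2⟩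
  have hper : ∀ t n, r0 ≤ n → pow1 a n = pow1 a (n + t * p) :=
    fun t n hn => pow1_shift_mul hpeq.symm t n hn
  -- cancellation : equal powers beyond the index differ by a multiple of the period
  have hcancel : ∀ m j, r0 ≤ m → pow1 a m = pow1 a (m + j) → j % p = 0 := by
    intro m j hm heq
    have hmle : m ≤ r0 + m * p :=
      (Nat.le_mul_of_pos_right m hppos).trans (Nat.le_add_left _ _)
    have h1 : pow1 a r0 = pow1 a (r0 + j) := by
      have e1 : pow1 a r0 = pow1 a (r0 + m * p) := hper m r0 le_rfl
      have e2 : pow1 a (r0 + m * p) = pow1 a (r0 + m * p + j) :=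
        pow1_shift heq _ hmle
      have e3 : pow1 a (r0 + j + m * p) = pow1 a (r0 + j) :=
        (hper m (r0 + j) (Nat.le_add_right _ _)).symm
      rw [e1, e2, show r0 + m * p + j = r0 + j + m * p by ring, e3]
    by_contra hne
    have hlt : j % p < p := Nat.mod_lt _ hppos
    have hpos : 0 < j % p := Nat.pos_of_ne_zero hne
    have h2 : pow1 a (r0 + j % p) = pow1 a r0 := by
      have e4 : pow1 a (r0 + j % p) = pow1 a (r0 + j % p + j / p * p) :=
        hper (j / p) _ (Nat.le_add_right _ _)
      rw [e4, Nat.add_assoc, Nat.mod_add_div']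
      exact h1.symm
    exact absurd (hpmin _ hpos h2) (by omega)
  have hkey : ∀ i j, i < j → j < r0 + p → pow1 a i = pow1 a j → False := by
    intro i j hij hj heq
    have hri : r0 ≤ i := hr0min i ⟨j, by omega, heq.symm⟩
    have hmod : (j - i) % p = 0 :=
      hcancel i (j - i) hri (by rw [show i + (j - i) = j by omega]; exact heq)
    have hdvd : p ∣ (j - i) := Nat.dvd_of_mod_eq_zero hmod
    have := Nat.le_of_dvd (by omega) hdvd
    omega
  have hinj : ∀ i j, i < r0 + p → j < r0 + p → pow1 a i = pow1 a j → i = j := by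
    intro i j hi hj heq
    rcases lt_trichotomy i j with h | h | h
    · exact absurd (hkey i j h hj heq) not_false
    · exact h
    · exact absurd (hkey j i h hi heq.symm) not_false
  have hidem := exists_idem_pow hfin a
  set m0 := Nat.find hidem with hm0def
  have hm0spec : pow1 a m0 * pow1 a m0 = pow1 a m0 := Nat.find_spec hidem
  have hm0min : ∀ n, pow1 a n * pow1 a n = pow1 a n → m0 ≤ n :=
    fun n hn => Nat.find_min' hidem hn
  have hidem_eq : ∀ n, pow1 a n * pow1 a n = pow1 a n → pow1 a (n + (n + 1)) = pow1 a n := by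
    intro n hn
    rw [show n + (n + 1) = n + n + 1 by omega, pow1_add]
    exact hn
  have hr0m : ∀ n, pow1 a n * pow1 a n = pow1 a n → r0 ≤ n := by
    intro n hn
    exact hr0min n ⟨n + (n + 1), by omega, hidem_eq n hn⟩
  have hpdvd : ∀ n, pow1 a n * pow1 a n = pow1 a n → (n + 1) % p = 0 := by
    intro n hn
    exact hcancel n (n + 1) (hr0m n hn) (hidem_eq n hn).symm
  have hred : ∀ n, ∃ m, m < r0 + p ∧ pow1 a n = pow1 a m := by
    intro n
    induction n using Nat.strong_induction_on with
    | _ n ihn =>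
      rcases Nat.lt_or_ge n (r0 + p) with h | h
      · exact ⟨n, h, rfl⟩
      · have e := hper 1 (n - p) (by omega)
        rw [one_mul] at e
        rw [show n - p + p = n by omega] at e
        obtain ⟨m, hm1, hm2⟩ := ihn (n - p) (by omega)
        exact ⟨m, hm1, e.symm.trans hm2⟩
  obtain ⟨mh, hmh1, hmh2⟩ := hred m0
  have hmhidem : pow1 a mh * pow1 a mh = pow1 a mh := by
    rw [← hmh2]; exact hm0spec
  have hm0lt : m0 < r0 + p := lt_of_le_of_lt (hm0min mh hmhidem) hmh1
  have huniqidem : ∀ n, pow1 a n * pow1 a n = pow1 a n → pow1 a n = pow1 a m0 := by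
    intro n hn
    have d1 : p ∣ (n + 1) := Nat.dvd_of_mod_eq_zero (hpdvd n hn)
    have d2 : p ∣ (m0 + 1) := Nat.dvd_of_mod_eq_zero (hpdvd m0 hm0spec)
    have hrn : r0 ≤ n := hr0m n hn
    have hrm : r0 ≤ m0 := hr0m m0 hm0spec
    rcases le_or_gt n m0 with h | h
    · have hdvd : p ∣ (m0 - n) := by
        have := Nat.dvd_sub d2 d1
        rwa [show m0 + 1 - (n + 1) = m0 - n by omega] at this
      obtain ⟨t, ht⟩ := hdvd
      have hh := hper t n hrn
      rw [mul_comm t p, ← ht, show n + (m0 - n) = m0 by omega] at hh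
      exact hh
    · have hdvd : p ∣ (n - m0) := by
        have := Nat.dvd_sub d1 d2
        rwa [show n + 1 - (m0 + 1) = n - m0 by omega] at this
      obtain ⟨t, ht⟩ := hdvd
      have hh := hper t m0 hrm
      rw [mul_comm t p, ← ht, show m0 + (n - m0) = n by omega] at hh
      exact hh.symm
  -- final counting
  have hTT : T.Subperm T := (List.Perm.refl T).subperm
  have hRlT : (T.filter (fun x => !decide (x = a))).Subperm T :=
    (List.filter_sublist (l := T)).subperm
  have hnopow := lemx hfin hlen hfree T.length T hTT le_rfl a ha
  have hcount : T.count a + (T.filter (fun x => !decide (x = a))).length = T.length := by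
    have hfp := List.filter_append_perm (fun x => decide (x = a)) T
    rw [List.filter_eq (l := T) a] at hfp
    have hle := hfp.length_eq
    simpa using hle
  have hPhicard : ((Finset.range (r0 + p)).image (pow1 a)).card = r0 + p := by
    rw [Finset.card_image_of_injOn, Finset.card_range]
    intro i hi j hj heq
    exact hinj i j (by simpa using hi) (by simpa using hj) heq
  have hePhi : pow1 a m0 ∈ (Finset.range (r0 + p)).image (pow1 a) :=
    Finset.mem_image.2 ⟨mh, Finset.mem_range.2 hmh1, hmh2.symm⟩
  have hsub : ((Finset.range (r0 + p)).image (pow1 a)).erase (pow1 a m0) ⊆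
      hfin.toFinset \ aset (T.filter (fun x => !decide (x = a))) := by
    intro s hs
    obtain ⟨hne, hsPhi⟩ := Finset.mem_erase.1 hs
    obtain ⟨i, hi, rfl⟩ := Finset.mem_image.1 hsPhi
    rw [Finset.mem_sdiff]
    refine ⟨?_, hnopow i⟩
    rw [Set.Finite.mem_toFinset]
    intro hidm
    exact hne (huniqidem i hidm)
  have hcard2 : r0 + p - 1 ≤ T.count a := by
    have h1 : (((Finset.range (r0 + p)).image (pow1 a)).erase (pow1 a m0)).card
        = r0 + p - 1 := by
      rw [Finset.card_erase_of_mem hePhi, hPhicard]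
    have h2 := Finset.card_le_card hsub
    rw [h1, Finset.card_sdiff_of_subset (aset_subset_F hfin hfree hRlT),
      FfinCard hfin hlen, aset_tight hfin hlen hfree hRlT] at h2
    omega
  have hvm0 : T.count a ≤ m0 := by
    by_contra hlt
    push_neg at hlt
    have hrep : (a :: List.replicate m0 a).Subperm T := by
      rw [← List.replicate_succ]
      apply Multiset.coe_le.1
      rw [Multiset.coe_replicate]
      apply Multiset.le_count_iff_replicate_le.1
      rw [Multiset.coe_count]
      omega
    obtain ⟨u, hu1, hu2⟩ := hrep
    have hmem : pow1 a m0 ∈ PiSet T :=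
      ⟨u, hu2, a, List.replicate m0 a, hu1.symm, sprod_replicate a m0⟩
    exact nonidem hfree hmem hm0spec
  have hveq : T.count a = r0 + p - 1 := by omega
  have hm0eq : m0 = r0 + p - 1 := by omega
  have hr0mod : r0 % p = 0 := by
    have h := hpdvd m0 hm0spec
    rw [show m0 + 1 = r0 + p by omega] at h
    rwa [Nat.add_mod_right] at h
  refine ⟨r0 + 1, p, ⟨⟨by omega, ⟨t₀ + 1, by omega, by omega, ?_⟩, ?_⟩, hppos, ?_, ?_⟩, ?_, ?_⟩
  · rw [show t₀ + 1 - 1 = t₀ by omega, show r0 + 1 - 1 = r0 by omega]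
    exact ht₀eq
  · intro r' hr' ⟨t, ht1, ht2, ht3⟩
    have := hr0min (r' - 1) ⟨t - 1, by omega, ht3⟩
    omega
  · rw [show r0 + 1 + p - 1 = r0 + p by omega, show r0 + 1 - 1 = r0 by omega]
    exact hpeq
  · intro p' h1 h2
    rw [show r0 + 1 + p' - 1 = r0 + p' by omega, show r0 + 1 - 1 = r0 by omega] at h2
    exact hpmin p' h1 h2
  · omega
  · show (r0 + 1) % p = 1 % p
    obtain ⟨u, hu⟩ := Nat.dvd_of_mod_eq_zero hr0mod
    rw [hu, Nat.add_comm, Nat.add_mul_mod_self_left]
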